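/- Let Ω ⊆ ℝ^d be a nonempty open set, let ω : Ω → 𝕂 be continuous and zero-free (ω(x) ≠ 0 for all x ∈ Ω), and let ψ : Ω → Ω be continuous with no fixed points (ψ(x) ≠ x for all x ∈ Ω). If the weighted composition operator C_{ω,ψ} is supercyclic on C(Ω, 𝕂) with the compact-open topology, then for every x ∈ Ω the closure in Ω of the forward orbit {ψ_n(x) : n ∈ ℕ₀} is not a compact subset of Ω. -/

import Mathlib

open Finset Filter Topology Uniformity

/-- Evaluation formula for iterates of a weighted composition operator. -/
lemma wco_iter_apply {𝕂 : Type*} [RCLike 𝕂] {α : Type*} [TopologicalSpace α]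
    (ω : C(α, 𝕂)) (ψ : C(α, α)) :
    ∀ (n : ℕ) (f : C(α, 𝕂)) (y : α),
      ((fun f : C(α, 𝕂) => ω * f.comp ψ)^[n] f) y
        = (∏ i ∈ Finset.range n, ω ((⇑ψ)^[i] y)) * f ((⇑ψ)^[n] y) := by
  intro n
  induction n with
  | zero => intro f y; simp
  | succ n ih =>
    intro f y
    rw [Function.iterate_succ_apply, ih]
    simp only [ContinuousMap.mul_apply, ContinuousMap.comp_apply]
    rw [Finset.prod_range_succ, Function.iterate_succ_apply' (⇑ψ) n y]
    ring

/-- If `C_{ω,ψ}` is supercyclic on `C(Ω, 𝕂)` (compact-open topology), `ω` is zero-free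
and `ψ` has no fixed points, then for every `x ∈ Ω` the closure in `Ω` of the forward
orbit `{ψ_n(x) : n ∈ ℕ}` is not compact. -/
theorem stmt_6 {𝕂 : Type*} [RCLike 𝕂] {d : ℕ} (Ω : Set (Fin d → ℝ))
    (hΩ : IsOpen Ω) (hne : Ω.Nonempty)
    (ω : C(↥Ω, 𝕂)) (hω : ∀ x : ↥Ω, ω x ≠ 0)
    (ψ : C(↥Ω, ↥Ω)) (hfix : ∀ x : ↥Ω, ψ x ≠ x)
    (hsc : ∃ g : C(↥Ω, 𝕂), Dense {h : C(↥Ω, 𝕂) |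
      ∃ (c : 𝕂) (n : ℕ), c • (fun f : C(↥Ω, 𝕂) => ω * f.comp ψ)^[n] g = h}) :
    ∀ x : ↥Ω, ¬ IsCompact (closure (Set.range fun n : ℕ => (⇑ψ)^[n] x)) := by
  obtain ⟨g, hd⟩ := hsc
  intro x hK
  set X : ℕ → ↥Ω := fun k => (⇑ψ)^[k] x with hXdef
  set K : Set ↥Ω := closure (Set.range X) with hKdef
  -- basic facts about the orbit and `K`
  have hXK : ∀ k, X k ∈ K := fun k => subset_closure (Set.mem_range_self k)
  have hXsucc : ∀ k, X (k + 1) = ψ (X k) := by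
    intro k
    simp only [hXdef]
    exact Function.iterate_succ_apply' (⇑ψ) k x
  have hmaps : Set.MapsTo (⇑ψ) (Set.range X) (Set.range X) := by
    rintro _ ⟨k, rfl⟩
    exact ⟨k + 1, hXsucc k⟩
  have hψK : ∀ y ∈ K, ψ y ∈ K := fun y hy =>
    map_mem_closure ψ.continuous hy hmaps
  have hKne : K.Nonempty := ⟨X 0, hXK 0⟩
  -- min and max of `‖ω‖` on `K`
  obtain ⟨ym, hymK, hmin⟩ := hK.exists_isMinOn hKne (ω.continuous.norm.continuousOn)
  obtain ⟨yM, hyMK, hmax⟩ := hK.exists_isMaxOn hKne (ω.continuous.norm.continuousOn)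
  set m : ℝ := ‖ω ym‖ with hmdef
  set M : ℝ := ‖ω yM‖ with hMdef
  have hm0 : 0 < m := norm_pos_iff.mpr (hω ym)
  have hmK : ∀ y ∈ K, m ≤ ‖ω y‖ := fun y hy => isMinOn_iff.mp hmin y hy
  have hMK : ∀ y ∈ K, ‖ω y‖ ≤ M := fun y hy => isMaxOn_iff.mp hmax y hy
  have hmM : m ≤ M := hMK ym hymK
  have hM0 : 0 < M := lt_of_lt_of_le hm0 hmM
  -- products of weights along the orbit
  set P : ℕ → 𝕂 := fun j => ∏ i ∈ Finset.range j, ω (X i) with hPdef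
  have hPne : ∀ j, P j ≠ 0 := by
    intro j
    simp only [hPdef]
    exact Finset.prod_ne_zero_iff.mpr fun i _ => hω _
  have hPpos : ∀ j, 0 < ‖P j‖ := fun j => norm_pos_iff.mpr (hPne j)
  have hPsucc : ∀ j, P (j + 1) = P j * ω (X j) := by
    intro j
    simp only [hPdef]
    exact Finset.prod_range_succ _ _
  have hP0 : P 0 = 1 := by simp [hPdef]
  set A : ℕ → 𝕂 := fun j => P j * g (X j) with hAdef
  -- evaluation of iterates along the orbit
  have heval : ∀ n k : ℕ,
      ((fun f : C(↥Ω, 𝕂) => ω * f.comp ψ)^[n] g) (X k) * P k = A (k + n) := by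
    intro n k
    rw [wco_iter_apply]
    have hXadd : ∀ i, (⇑ψ)^[i] (X k) = X (k + i) := by
      intro i
      simp only [hXdef]
      rw [← Function.iterate_add_apply, add_comm]
    simp only [hXadd]
    have hPadd : P (k + n) = P k * ∏ i ∈ Finset.range n, ω (X (k + i)) := by
      simp only [hPdef]
      exact Finset.prod_range_add _ _ _
    simp only [hAdef, hPadd]
    ring
  -- the approximation property coming from density
  have approx : ∀ (f : C(↥Ω, 𝕂)) (ε : ℝ), 0 < ε →
      ∃ (c : 𝕂) (n : ℕ), ∀ k : ℕ,
        ‖c * A (k + n) - f (X k) * P k‖ ≤ ε * ‖P k‖ := by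
    intro f ε hε
    have hV : {p : 𝕂 × 𝕂 | dist p.1 p.2 < ε} ∈ 𝓤 𝕂 := Metric.dist_mem_uniformity hε
    have hE : {fg : C(↥Ω, 𝕂) × C(↥Ω, 𝕂) |
        ∀ y ∈ K, (fg.1 y, fg.2 y) ∈ {p : 𝕂 × 𝕂 | dist p.1 p.2 < ε}} ∈ 𝓤 C(↥Ω, 𝕂) :=
      (ContinuousMap.mem_compactConvergence_entourage_iff _).mpr
        ⟨K, _, hK, hV, subset_rfl⟩
    have hN := UniformSpace.ball_mem_nhds f hE
    obtain ⟨h, hh1, c, n, rfl⟩ := mem_closure_iff_nhds.mp (hd f) _ hN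
    refine ⟨c, n, fun k => ?_⟩
    have hball : dist (f (X k))
        ((c • (fun f : C(↥Ω, 𝕂) => ω * f.comp ψ)^[n] g) (X k)) < ε :=
      hh1 (X k) (hXK k)
    have e1 : c * A (k + n) - f (X k) * P k
        = ((c • (fun f : C(↥Ω, 𝕂) => ω * f.comp ψ)^[n] g) (X k) - f (X k)) * P k := by
      rw [ContinuousMap.smul_apply, smul_eq_mul, sub_mul, mul_assoc, heval n k]
    rw [e1, norm_mul]
    refine mul_le_mul_of_nonneg_right ?_ (norm_nonneg _)
    rw [← dist_eq_norm, dist_comm]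
    exact hball.le
  -- Step 1: approximate the constant function 1 within 1/2
  obtain ⟨c₁, n₁, h1⟩ := approx 1 (1/2) one_half_pos
  have h1' : ∀ k, ‖c₁ * A (k + n₁) - P k‖ ≤ 1/2 * ‖P k‖ := by
    intro k
    have := h1 k
    rwa [ContinuousMap.one_apply, one_mul] at this
  have hc1low : ∀ k, ‖P k‖ / 2 ≤ ‖c₁ * A (k + n₁)‖ := by
    intro k
    have h := h1' k
    have h2 := norm_sub_norm_le (P k) (c₁ * A (k + n₁))
    rw [norm_sub_rev] at h2
    linarith
  have hc1high : ∀ k, ‖c₁ * A (k + n₁)‖ ≤ 3/2 * ‖P k‖ := by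
    intro k
    have h := h1' k
    have h2 := norm_sub_norm_le (c₁ * A (k + n₁)) (P k)
    linarith
  have hc1 : c₁ ≠ 0 := by
    intro hc
    have h0 := hc1low 0
    rw [hc, zero_mul, norm_zero] at h0
    exact absurd h0 (not_le.mpr (half_pos (hPpos 0)))
  have hc1n : 0 < ‖c₁‖ := norm_pos_iff.mpr hc1
  -- the key growth estimate for `A`
  have hratio : ∀ j, m / 3 * ‖A (j + n₁)‖ ≤ ‖A (j + 1 + n₁)‖ := by
    intro j
    have hlow := hc1low (j + 1)
    have hhigh := hc1high j
    have hPs : ‖P (j + 1)‖ = ‖P j‖ * ‖ω (X j)‖ := by rw [hPsucc, norm_mul]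
    have hωm : m ≤ ‖ω (X j)‖ := hmK _ (hXK j)
    have hint1 : 0 ≤ m * (3/2 * ‖P j‖ - ‖c₁ * A (j + n₁)‖) :=
      mul_nonneg hm0.le (sub_nonneg.mpr hhigh)
    have hint2 : 0 ≤ ‖P j‖ * (‖ω (X j)‖ - m) :=
      mul_nonneg (norm_nonneg _) (sub_nonneg.mpr hωm)
    have key : m / 3 * ‖c₁ * A (j + n₁)‖ ≤ ‖c₁ * A (j + 1 + n₁)‖ := by
      nlinarith
    rw [norm_mul c₁ (A (j + n₁)), norm_mul c₁ (A (j + 1 + n₁))] at key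
    refine le_of_mul_le_mul_left ?_ hc1n
    calc ‖c₁‖ * (m / 3 * ‖A (j + n₁)‖) = m / 3 * (‖c₁‖ * ‖A (j + n₁)‖) := by ring
      _ ≤ ‖c₁‖ * ‖A (j + 1 + n₁)‖ := key
  -- Step 2: find a cluster point of the orbit and a bump function
  obtain ⟨z, hzK, φ, hφmono, hφtend⟩ := hK.tendsto_subseq hXK
  have hr : 0 < dist (ψ z) z := dist_pos.mpr (hfix z)
  set r : ℝ := dist (ψ z) z with hrdef
  obtain ⟨δ₀, hδ₀pos, hδ₀⟩ :=
    Metric.continuousAt_iff.mp ψ.continuous.continuousAt (r/2) (by positivity)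
  set δ : ℝ := min δ₀ (r/2) with hδdef
  have hδpos : 0 < δ := lt_min hδ₀pos (by positivity)
  set u : ↥Ω → ℝ := fun y => min 1 (max 0 (2 - 2/δ * dist y z)) with hudef
  have hucont : Continuous u := by
    apply Continuous.min continuous_const
    apply Continuous.max continuous_const
    exact continuous_const.sub (continuous_const.mul (continuous_id.dist continuous_const))
  have hu1 : ∀ y, dist y z ≤ δ/2 → u y = 1 := by
    intro y hy
    have h2 : (1:ℝ) ≤ 2 - 2/δ * dist y z := by
      have h3 : 2/δ * dist y z ≤ 2/δ * (δ/2) :=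
        mul_le_mul_of_nonneg_left hy (by positivity)
      have h4 : 2/δ * (δ/2) = 1 := by field_simp
      linarith
    simp only [hudef]
    rw [max_eq_right (by linarith : (0:ℝ) ≤ 2 - 2/δ * dist y z)]
    exact min_eq_left h2
  have hu0 : ∀ y, δ ≤ dist y z → u y = 0 := by
    intro y hy
    have h2 : 2 - 2/δ * dist y z ≤ 0 := by
      have h3 : 2/δ * δ ≤ 2/δ * dist y z :=
        mul_le_mul_of_nonneg_left hy (by positivity)
      have h4 : 2/δ * δ = 2 := by field_simp
      linarith
    simp only [hudef]
    rw [max_eq_left h2]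
    exact min_eq_right (by norm_num)
  have hψu : ∀ y : ↥Ω, dist y z ≤ δ/2 → u (ψ y) = 0 := by
    intro y hy
    apply hu0
    have hδδ₀ : δ ≤ δ₀ := min_le_left _ _
    have h1 : dist y z < δ₀ := lt_of_le_of_lt hy (by linarith)
    have h2 : dist (ψ y) (ψ z) < r/2 := hδ₀ h1
    have h3 := dist_triangle (ψ z) (ψ y) z
    rw [dist_comm (ψ z) (ψ y)] at h3
    have hδr : δ ≤ r/2 := min_le_right _ _
    linarith
  -- the 𝕂-valued bump function
  set f₂ : C(↥Ω, 𝕂) := ⟨fun y => ((u y : ℝ) : 𝕂),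
    RCLike.continuous_ofReal.comp hucont⟩ with hf₂def
  set ε : ℝ := m / (7 * M) with hεdef
  have hε : 0 < ε := by positivity
  have hε17 : ε ≤ 1/7 := by
    rw [hεdef, div_le_div_iff₀ (by positivity) (by norm_num)]
    linarith
  have hεM : ε * M = m / 7 := by
    rw [hεdef]
    field_simp
  obtain ⟨c₂, n₂, h2⟩ := approx f₂ ε hε
  -- choose an orbit point close to `z`, far along the orbit
  obtain ⟨N, hN⟩ := Metric.tendsto_atTop.mp hφtend (δ/2) (by positivity)
  set k : ℕ := φ (max N n₁) with hkdef
  have hkdist : dist (X k) z < δ/2 := hN (max N n₁) (le_max_left _ _)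
  have hkge : n₁ ≤ k := le_trans (le_max_right N n₁) hφmono.le_apply
  have hk1 : u (X k) = 1 := hu1 _ hkdist.le
  have hk0 : u (X (k + 1)) = 0 := by
    rw [hXsucc k]
    exact hψu _ hkdist.le
  -- derive the contradiction
  have HA1 : 6/7 * ‖P k‖ ≤ ‖c₂ * A (k + n₂)‖ := by
    have h := h2 k
    have hf : f₂ (X k) = 1 := by
      simp only [hf₂def, ContinuousMap.coe_mk, hk1, RCLike.ofReal_one]
    rw [hf, one_mul] at h
    have h3 := norm_sub_norm_le (P k) (c₂ * A (k + n₂))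
    rw [norm_sub_rev] at h3
    have h4 : ε * ‖P k‖ ≤ 1/7 * ‖P k‖ :=
      mul_le_mul_of_nonneg_right hε17 (norm_nonneg _)
    linarith
  have HA2 : ‖c₂ * A (k + 1 + n₂)‖ ≤ m/7 * ‖P k‖ := by
    have h := h2 (k + 1)
    have hf : f₂ (X (k + 1)) = 0 := by
      simp only [hf₂def, ContinuousMap.coe_mk, hk0, RCLike.ofReal_zero]
    rw [hf, zero_mul, sub_zero] at h
    have hPs : ‖P (k + 1)‖ = ‖P k‖ * ‖ω (X k)‖ := by rw [hPsucc, norm_mul]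
    have hωM : ‖ω (X k)‖ ≤ M := hMK _ (hXK k)
    have h5 : ε * ‖P (k + 1)‖ ≤ m/7 * ‖P k‖ := by
      rw [hPs]
      calc ε * (‖P k‖ * ‖ω (X k)‖) ≤ ε * (‖P k‖ * M) := by
            apply mul_le_mul_of_nonneg_left
              (mul_le_mul_of_nonneg_left hωM (norm_nonneg _)) hε.le
        _ = m/7 * ‖P k‖ := by rw [← hεM]; ring
    linarith
  have key2 : m / 3 * ‖c₂ * A (k + n₂)‖ ≤ ‖c₂ * A (k + 1 + n₂)‖ := by
    have hr1 := hratio (k + n₂ - n₁)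
    rw [show k + n₂ - n₁ + n₁ = k + n₂ from by omega,
        show k + n₂ - n₁ + 1 + n₁ = k + 1 + n₂ from by omega] at hr1
    have h7 := mul_le_mul_of_nonneg_left hr1 (norm_nonneg c₂)
    rw [norm_mul c₂ (A (k + n₂)), norm_mul c₂ (A (k + 1 + n₂))]
    calc m / 3 * (‖c₂‖ * ‖A (k + n₂)‖) = ‖c₂‖ * (m / 3 * ‖A (k + n₂)‖) := by ring
      _ ≤ ‖c₂‖ * ‖A (k + 1 + n₂)‖ := h7
  -- combine: (m/3)·(6/7)·‖P k‖ ≤ m/7·‖P k‖, contradiction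
  have hfinal : m / 3 * (6/7 * ‖P k‖) ≤ m/7 * ‖P k‖ := by
    calc m / 3 * (6/7 * ‖P k‖) ≤ m / 3 * ‖c₂ * A (k + n₂)‖ :=
          mul_le_mul_of_nonneg_left HA1 (by positivity)
      _ ≤ ‖c₂ * A (k + 1 + n₂)‖ := key2
      _ ≤ m/7 * ‖P k‖ := HA2
  have := hPpos k
  nlinarith
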